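/- arXiv:1904.12360 — 2 statements merged into one kernel-verified Lean document; each statement's English description precedes it below -/
import Mathlib

section
/- For any positive definite matrix A in R^{p×p}, the unique minimizer over the set of p×p lower triangular matrices L with positive diagonal entries of the Cholesky loss L_chol(L; A) = (1/2)·tr(A·L·Lᵀ) − log|det(L)| is the Cholesky factor C(A⁻¹) of A⁻¹ (the unique lower triangular matrix with positive diagonal such that A⁻¹ = C·Cᵀ). -/
open Matrix

/-- Cholesky loss: L_chol(L; A) = (1/2)·tr(A L Lᵀ) − log det L. -/
noncomputable def cholLoss {p : ℕ} (A L : Matrix (Fin p) (Fin p) ℝ) : ℝ :=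
  (1 / 2) * (A * L * Lᵀ).trace - Real.log L.det

/-- For positive `x`, `1/2 ≤ x²/2 − log x`, with equality iff `x = 1`. -/
lemma chol_scalar {x : ℝ} (hx : 0 < x) :
    1 / 2 ≤ 1 / 2 * x ^ 2 - Real.log x ∧
      (1 / 2 * x ^ 2 - Real.log x = 1 / 2 → x = 1) := by
  have hlog : Real.log (x ^ 2) = 2 * Real.log x := by
    simpa using Real.log_pow 2 x
  constructor
  · have h := Real.log_le_sub_one_of_pos (pow_pos hx 2)
    rw [hlog] at h
    linarith
  · intro heq
    by_contra hne
    have hx2 : x ^ 2 ≠ 1 := by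
      intro h
      exact hne (by nlinarith)
    have h := Real.log_lt_sub_one_of_pos (pow_pos hx 2) hx2
    rw [hlog] at h
    linarith

/-- Diagonal entries of a product of lower-triangular matrices. -/
lemma mul_diag_of_tri {p : ℕ} (X Y : Matrix (Fin p) (Fin p) ℝ)
    (hX : ∀ i j, i < j → X i j = 0) (hY : ∀ i j, i < j → Y i j = 0) (i : Fin p) :
    (X * Y) i i = X i i * Y i i := by
  rw [Matrix.mul_apply]
  apply Finset.sum_eq_single
  · intro k _ hk
    rcases lt_or_gt_of_ne hk with h | h
    · rw [hY k i h, mul_zero]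
    · rw [hX i k h, zero_mul]
  · intro h; exact absurd (Finset.mem_univ i) h

/-- The Cholesky factor C of A⁻¹ is the unique minimizer of the Cholesky loss
over lower triangular matrices with positive diagonal. -/
theorem cholLoss_unique_minimizer {p : ℕ} (A : Matrix (Fin p) (Fin p) ℝ)
    (hA : A.PosDef) (C : Matrix (Fin p) (Fin p) ℝ)
    (hCtri : ∀ i j, i < j → C i j = 0) (hCdiag : ∀ i, 0 < C i i)
    (hC : A⁻¹ = C * Cᵀ) :
    ∀ L : Matrix (Fin p) (Fin p) ℝ, (∀ i j, i < j → L i j = 0) →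
      (∀ i, 0 < L i i) →
      cholLoss A C ≤ cholLoss A L ∧ (cholLoss A L = cholLoss A C → L = C) := by
  intro L hLtri hLdiag
  -- basic facts about C
  have hCbt : C.BlockTriangular OrderDual.toDual := fun i j h => hCtri i j h
  have hCdet : C.det = ∏ i, C i i := Matrix.det_of_lowerTriangular C hCbt
  have hCdetpos : 0 < C.det := by
    rw [hCdet]; exact Finset.prod_pos fun i _ => hCdiag i
  have hCu : IsUnit C.det := (ne_of_gt hCdetpos).isUnit
  have := C.invertibleOfIsUnitDet hCu
  have hCinvbt : (C⁻¹).BlockTriangular OrderDual.toDual :=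
    blockTriangular_inv_of_blockTriangular hCbt
  have hCinvtri : ∀ i j, i < j → C⁻¹ i j = 0 := fun i j h => hCinvbt h
  have hCinvdiag : ∀ i, C⁻¹ i i = 1 / C i i := by
    intro i
    have h1 : (C⁻¹ * C) i i = C⁻¹ i i * C i i := mul_diag_of_tri _ _ hCinvtri hCtri i
    rw [Matrix.nonsing_inv_mul C hCu, Matrix.one_apply_eq] at h1
    rw [eq_div_iff (ne_of_gt (hCdiag i))]
    exact h1.symm
  -- the matrix M = C⁻¹ * L
  set M : Matrix (Fin p) (Fin p) ℝ := C⁻¹ * L with hM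
  have hMbt : M.BlockTriangular OrderDual.toDual :=
    hCinvbt.mul (fun i j h => hLtri i j h)
  have hMtri : ∀ i j, i < j → M i j = 0 := fun i j h => hMbt h
  have hMdiag : ∀ i, 0 < M i i := by
    intro i
    rw [hM, mul_diag_of_tri _ _ hCinvtri hLtri i, hCinvdiag i]
    exact mul_pos (one_div_pos.2 (hCdiag i)) (hLdiag i)
  have hMdet : M.det = ∏ i, M i i := Matrix.det_of_lowerTriangular M hMbt
  have hMdetpos : 0 < M.det := by
    rw [hMdet]; exact Finset.prod_pos fun i _ => hMdiag i
  -- L = C * M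
  have hLM : L = C * M := by
    rw [hM, ← Matrix.mul_assoc, Matrix.mul_nonsing_inv C hCu, Matrix.one_mul]
  -- A is invertible and A = Cᵀ⁻¹ * C⁻¹
  have hAu : IsUnit A.det := (ne_of_gt hA.det_pos).isUnit
  have hAeq : A = Cᵀ⁻¹ * C⁻¹ := by
    have h1 : A = (A⁻¹)⁻¹ := (Matrix.nonsing_inv_nonsing_inv A hAu).symm
    rw [h1, hC, Matrix.mul_inv_rev]
  -- trace formula: tr(A L Lᵀ) = ∑ i, ∑ j, (M i j)^2
  have htrace : (A * L * Lᵀ).trace = ∑ i, ∑ j, (M i j) ^ 2 := by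
    have h1 : A * L * Lᵀ = Cᵀ⁻¹ * (M * Lᵀ) := by
      rw [hAeq, hM]; simp only [Matrix.mul_assoc]
    have h2 : (Cᵀ⁻¹ * (M * Lᵀ)).trace = (M * Lᵀ * Cᵀ⁻¹).trace :=
      Matrix.trace_mul_comm _ _
    have h3 : M * Lᵀ * Cᵀ⁻¹ = M * Mᵀ := by
      rw [hM, ← Matrix.transpose_nonsing_inv, Matrix.mul_assoc, ← Matrix.transpose_mul]
    rw [h1, h2, h3, Matrix.trace]
    apply Finset.sum_congr rfl
    intro i _
    rw [Matrix.diag_apply, Matrix.mul_apply]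
    apply Finset.sum_congr rfl
    intro j _
    rw [Matrix.transpose_apply, sq]
  -- det formula
  have hdet : Real.log L.det = Real.log C.det + ∑ i, Real.log (M i i) := by
    rw [hLM, Matrix.det_mul, Real.log_mul (ne_of_gt hCdetpos) (ne_of_gt hMdetpos), hMdet,
      Real.log_prod (fun i _ => ne_of_gt (hMdiag i))]
  -- loss formula for L
  have hloss : cholLoss A L =
      (∑ i, (1 / 2 * (∑ j, (M i j) ^ 2) - Real.log (M i i))) - Real.log C.det := by
    rw [cholLoss, htrace, hdet, Finset.sum_sub_distrib, Finset.mul_sum]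
    ring
  -- loss value at C
  have hlossC : cholLoss A C = (p : ℝ) / 2 - Real.log C.det := by
    have h1 : A * C * Cᵀ = 1 := by
      rw [Matrix.mul_assoc, ← hC, Matrix.mul_nonsing_inv A hAu]
    rw [cholLoss, h1, Matrix.trace_one]
    simp
    ring
  -- pointwise inequalities
  have hterm : ∀ i : Fin p,
      (1 : ℝ) / 2 ≤ 1 / 2 * (∑ j, (M i j) ^ 2) - Real.log (M i i) := by
    intro i
    have hle : (M i i) ^ 2 ≤ ∑ j, (M i j) ^ 2 :=
      Finset.single_le_sum (fun j _ => sq_nonneg (M i j)) (Finset.mem_univ i)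
    have := (chol_scalar (hMdiag i)).1
    linarith
  have hsum : (p : ℝ) / 2 ≤ ∑ i, (1 / 2 * (∑ j, (M i j) ^ 2) - Real.log (M i i)) := by
    calc (p : ℝ) / 2 = ∑ _i : Fin p, (1 : ℝ) / 2 := by
          simp [Finset.sum_const]; ring
      _ ≤ _ := Finset.sum_le_sum fun i _ => hterm i
  constructor
  · rw [hloss, hlossC]; linarith
  · -- uniqueness
    intro heq
    rw [hloss, hlossC] at heq
    have hsum_eq : ∑ i, (1 / 2 * (∑ j, (M i j) ^ 2) - Real.log (M i i))
        = ∑ _i : Fin p, (1 : ℝ) / 2 := by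
      have : (∑ _i : Fin p, (1 : ℝ) / 2) = (p : ℝ) / 2 := by
        simp [Finset.sum_const]; ring
      linarith
    have hpt : ∀ i ∈ Finset.univ,
        1 / 2 * (∑ j, (M i j) ^ 2) - Real.log (M i i) = (1 : ℝ) / 2 :=
      fun i hi =>
        ((Finset.sum_eq_sum_iff_of_le (fun i _ => hterm i)).1 hsum_eq.symm i hi).symm
    -- from each pointwise equality, deduce M i j = 0 for j ≠ i and M i i = 1
    have hMone : M = 1 := by
      have key : ∀ i : Fin p, (∑ j, (M i j) ^ 2 = (M i i) ^ 2) ∧ M i i = 1 := by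
        intro i
        have hi := hpt i (Finset.mem_univ i)
        have hle : (M i i) ^ 2 ≤ ∑ j, (M i j) ^ 2 :=
          Finset.single_le_sum (fun j _ => sq_nonneg (M i j)) (Finset.mem_univ i)
        have hsc := chol_scalar (hMdiag i)
        have hs_eq : ∑ j, (M i j) ^ 2 = (M i i) ^ 2 := by
          by_contra hne
          have hlt : (M i i) ^ 2 < ∑ j, (M i j) ^ 2 := lt_of_le_of_ne hle (Ne.symm hne)
          have := hsc.1
          linarith
        refine ⟨hs_eq, hsc.2 ?_⟩
        rw [← hs_eq]; exact hi
      ext i j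
      rcases lt_trichotomy i j with h | h | h
      · rw [hMtri i j h, Matrix.one_apply_ne (ne_of_lt h)]
      · subst h; rw [(key i).2, Matrix.one_apply_eq]
      · -- i > j : show M i j = 0 from sum of squares equality
        have hs := (key i).1
        have h0 : ∑ j ∈ Finset.univ.erase i, (M i j) ^ 2 = 0 := by
          have hs' : (M i i) ^ 2 + ∑ j ∈ Finset.univ.erase i, (M i j) ^ 2
              = ∑ j, (M i j) ^ 2 := Finset.add_sum_erase Finset.univ
            (fun j => (M i j) ^ 2) (Finset.mem_univ i)
          linarith
        have hj : (M i j) ^ 2 = 0 := by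
          have hmem : j ∈ Finset.univ.erase i :=
            Finset.mem_erase.2 ⟨ne_of_lt h, Finset.mem_univ j⟩
          exact (Finset.sum_eq_zero_iff_of_nonneg
            (fun k _ => sq_nonneg (M i k))).1 h0 j hmem
        have := pow_eq_zero_iff (n := 2) (by norm_num) |>.1 hj
        rw [this, Matrix.one_apply_ne (ne_of_gt h)]
    rw [hLM, hMone, Matrix.mul_one]
end

section
/- For any positive definite matrix A ∈ R^{p×p}, the minimum value over lower triangular matrices L with positive diagonal of the Cholesky loss L_chol(L; A) = (1/2)·tr(A L Lᵀ) − log(det L) equals (1/2)·(p + log det A). -/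
open Matrix

/-- Diagonal entry of a product of lower triangular matrices. -/
lemma cholAux_mul_diag {p : ℕ} (K L : Matrix (Fin p) (Fin p) ℝ)
    (hK : ∀ i j, i < j → K i j = 0) (hL : ∀ i j, i < j → L i j = 0) (i : Fin p) :
    (K * L) i i = K i i * L i i := by
  rw [Matrix.mul_apply]
  refine Finset.sum_eq_single i (fun k _ hk => ?_) (by simp)
  rcases lt_or_gt_of_ne hk with h | h
  · rw [hL k i h, mul_zero]
  · rw [hK i k h, zero_mul]

/-- Reverse Cholesky: `A = Kᵀ K` with `K` lower triangular with positive diagonal. -/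
lemma cholAux_exists {p : ℕ} (A : Matrix (Fin p) (Fin p) ℝ) (hA : A.PosDef) :
    ∃ K : Matrix (Fin p) (Fin p) ℝ,
      (∀ i j, i < j → K i j = 0) ∧ (∀ i, 0 < K i i) ∧ Kᵀ * K = A := by
  haveI : WellFoundedLT (Fin p) := inferInstance
  have hS : (A⁻¹).PosDef := hA.inv
  set S := A⁻¹ with hSdef
  set W := LDL.lowerInv hS with hWdef
  haveI : Invertible W := by
    rw [hWdef, LDL.lowerInv_eq_gramSchmidtBasis hS]
    letI := Sᵀ.toNormedAddCommGroup hS.transpose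
    letI := Sᵀ.toInnerProductSpace hS.transpose.posSemidef
    haveI := Module.Basis.invertibleToMatrix (Pi.basisFun ℝ (Fin p))
      (InnerProductSpace.gramSchmidtBasis (Pi.basisFun ℝ (Fin p)))
    exact Matrix.invertibleTranspose _
  haveI : Invertible Wᵀ := Matrix.invertibleTranspose W
  have hWdet : W.det ≠ 0 := (Matrix.isUnit_det_of_invertible W).ne_zero
  have hWtri : ∀ i j : Fin p, i < j → W i j = 0 := fun i j h => LDL.lowerInv_triangular hS h
  set d := LDL.diagEntries hS with hddef
  have hDconj : Matrix.diagonal d = W * S * Wᵀ := by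
    have h0 := LDL.diag_eq_lowerInv_conj hS
    rw [conjTranspose_eq_transpose_of_trivial] at h0
    have hdd : Matrix.diagonal d = LDL.diag hS := by
      unfold LDL.diag; congr!
    rw [hdd]; exact h0
  have hd : ∀ i, 0 < d i := by
    intro i
    have hx : W i ≠ 0 := by
      intro h
      exact hWdet (Matrix.det_eq_zero_of_row_eq_zero i (fun j => congrFun h j))
    have hpos := hS.dotProduct_mulVec_pos hx
    have hdi : d i = star (W i) ⬝ᵥ (S *ᵥ W i) := by
      have h2 := congrFun (congrFun hDconj i) i
      rw [Matrix.diagonal_apply_eq] at h2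
      rw [h2]
      simp only [Matrix.mul_apply, Matrix.transpose_apply, Matrix.mulVec, dotProduct,
        star_trivial, Finset.sum_mul, Finset.mul_sum]
      rw [Finset.sum_comm]
      exact Finset.sum_congr rfl fun k _ => Finset.sum_congr rfl fun j _ => by ring
    rw [hdi]; exact hpos
  -- diagonal of W is nonzero
  have hWblock : W.BlockTriangular OrderDual.toDual :=
    fun i j h => hWtri i j (by exact_mod_cast h)
  have hWdetprod : W.det = ∏ i, W i i := Matrix.det_of_lowerTriangular W hWblock
  have hWdiag : ∀ i, W i i ≠ 0 := by
    intro i hzero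
    apply hWdet
    rw [hWdetprod]
    exact Finset.prod_eq_zero (Finset.mem_univ i) hzero
  set c : Fin p → ℝ := fun i => Real.sqrt (d i) with hcdef
  have hc : ∀ i, 0 < c i := fun i => Real.sqrt_pos.2 (hd i)
  set s : Fin p → ℝ := fun i => if 0 < W i i then (c i)⁻¹ else -(c i)⁻¹ with hsdef
  have hs_sq : ∀ i, s i * s i = (d i)⁻¹ := by
    intro i
    have hcc : c i * c i = d i := Real.mul_self_sqrt (hd i).le
    by_cases h : 0 < W i i <;>
      simp only [hsdef, h, if_true, if_false, neg_mul_neg, neg_neg] <;>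
      rw [← mul_inv, hcc]
  have hs_pos : ∀ i, 0 < s i * W i i := by
    intro i
    by_cases h : 0 < W i i
    · simp only [hsdef, h, if_true]
      exact mul_pos (inv_pos.2 (hc i)) h
    · have hneg : W i i < 0 := lt_of_le_of_ne (not_lt.mp h) (hWdiag i)
      simp only [hsdef, h, if_false]
      rw [neg_mul]
      exact neg_pos.2 (mul_neg_of_pos_of_neg (inv_pos.2 (hc i)) hneg)
  refine ⟨Matrix.diagonal s * W, fun i j h => ?_, fun i => ?_, ?_⟩
  · rw [Matrix.diagonal_mul, hWtri i j h, mul_zero]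
  · rw [Matrix.diagonal_mul]; exact hs_pos i
  · -- (diagonal s * W)ᵀ * (diagonal s * W) = A
    have hAdet : IsUnit A.det := isUnit_iff_ne_zero.2 hA.det_pos.ne'
    have h3 : Matrix.diagonal s * Matrix.diagonal s = Matrix.diagonal fun i => (d i)⁻¹ := by
      rw [Matrix.diagonal_mul_diagonal]
      exact congrArg _ (funext hs_sq)
    have hmid : (Matrix.diagonal s * W)ᵀ * (Matrix.diagonal s * W)
        = Wᵀ * Matrix.diagonal (fun i => (d i)⁻¹) * W := by
      rw [Matrix.transpose_mul, Matrix.diagonal_transpose, Matrix.mul_assoc,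
        ← Matrix.mul_assoc (Matrix.diagonal s), h3, ← Matrix.mul_assoc]
    rw [hmid]
    -- show Wᵀ * diagonal d⁻¹ * W * S = 1, hence it equals S⁻¹ = A
    have hWS : W * S = Matrix.diagonal d * (Wᵀ)⁻¹ := by
      have := congrArg (fun M => M * (Wᵀ)⁻¹) hDconj
      simpa [Matrix.mul_assoc, Matrix.mul_inv_of_invertible] using this.symm
    have hleft : Wᵀ * Matrix.diagonal (fun i => (d i)⁻¹) * W * S = 1 := by
      rw [Matrix.mul_assoc, hWS, Matrix.mul_assoc Wᵀ,
        ← Matrix.mul_assoc (Matrix.diagonal fun i => (d i)⁻¹) (Matrix.diagonal d),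
        Matrix.diagonal_mul_diagonal]
      have h2 : (fun i => (d i)⁻¹ * d i) = fun _ => (1 : ℝ) := by
        funext i; exact inv_mul_cancel₀ (hd i).ne'
      rw [h2, Matrix.diagonal_one, Matrix.one_mul, Matrix.mul_inv_of_invertible]
    have := Matrix.inv_eq_left_inv hleft
    rw [hSdef, Matrix.nonsing_inv_nonsing_inv A hAdet] at this
    exact this.symm


/-- The minimum value of the Cholesky loss L ↦ (1/2)tr(A L Lᵀ) − log det L over
lower triangular matrices with positive diagonal equals (1/2)(p + log det A). -/
theorem cholLoss_min_value {p : ℕ} (A : Matrix (Fin p) (Fin p) ℝ) (hA : A.PosDef) :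
    IsLeast
      {v : ℝ | ∃ L : Matrix (Fin p) (Fin p) ℝ,
        (∀ i j, i < j → L i j = 0) ∧ (∀ i, 0 < L i i) ∧
        v = (1 / 2) * (A * L * Lᵀ).trace - Real.log L.det}
      ((1 / 2) * ((p : ℝ) + Real.log A.det)) := by
  obtain ⟨K, hKt, hKd, hKA⟩ := cholAux_exists A hA
  have hKblock : K.BlockTriangular (OrderDual.toDual : Fin p → (Fin p)ᵒᵈ) :=
    fun i j h => hKt i j (by exact_mod_cast h)
  have hKdetprod : K.det = ∏ i, K i i := Matrix.det_of_lowerTriangular K hKblock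
  have hKdetpos : 0 < K.det := by
    rw [hKdetprod]; exact Finset.prod_pos fun i _ => hKd i
  haveI : Invertible K := K.invertibleOfIsUnitDet (isUnit_iff_ne_zero.2 hKdetpos.ne')
  haveI : Invertible Kᵀ := Matrix.invertibleTranspose K
  -- log det A = 2 log det K
  have hAdetK : A.det = K.det * K.det := by
    rw [← hKA, Matrix.det_mul, Matrix.det_transpose]
  have hlogA : Real.log A.det = 2 * Real.log K.det := by
    rw [hAdetK, Real.log_mul hKdetpos.ne' hKdetpos.ne']; ring
  constructor
  · -- membership : take L = K⁻¹
    refine ⟨K⁻¹, ?_, ?_, ?_⟩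
    · intro i j h
      exact Matrix.blockTriangular_inv_of_blockTriangular hKblock
        (by exact_mod_cast h : (OrderDual.toDual : Fin p → (Fin p)ᵒᵈ) j < OrderDual.toDual i)
    · intro i
      have hinvt : ∀ i j : Fin p, i < j → K⁻¹ i j = 0 := fun i j h =>
        Matrix.blockTriangular_inv_of_blockTriangular hKblock (by exact_mod_cast h)
      have h1 : K i i * K⁻¹ i i = 1 := by
        rw [← cholAux_mul_diag K K⁻¹ hKt hinvt i, Matrix.mul_inv_of_invertible,
          Matrix.one_apply_eq]
      have := (hKd i).ne'
      nlinarith [hKd i]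
    · -- value
      have hALL : A * K⁻¹ * (K⁻¹)ᵀ = 1 := by
        rw [← hKA, Matrix.mul_assoc Kᵀ, Matrix.mul_inv_of_invertible, Matrix.mul_one,
          Matrix.transpose_nonsing_inv, Matrix.mul_inv_of_invertible]
      have hdetinv : (K⁻¹).det = (K.det)⁻¹ := by
        rw [Matrix.det_nonsing_inv, Ring.inverse_eq_inv']
      rw [hALL, Matrix.trace_one, hdetinv, Real.log_inv, hlogA]
      simp [Fintype.card_fin]
      ring
  · -- lower bound
    rintro v ⟨L, hLt, hLd, rfl⟩
    set M := K * L with hMdef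
    have hMt : ∀ i j : Fin p, i < j → M i j = 0 := by
      intro i j h
      rw [hMdef, Matrix.mul_apply]
      apply Finset.sum_eq_zero
      intro k _
      rcases lt_or_ge i k with hik | hik
      · rw [hKt i k hik, zero_mul]
      · rw [hLt k j (lt_of_le_of_lt hik h), mul_zero]
    have hMd : ∀ i, 0 < M i i := by
      intro i; rw [hMdef, cholAux_mul_diag K L hKt hLt i]
      exact mul_pos (hKd i) (hLd i)
    have hMblock : M.BlockTriangular (OrderDual.toDual : Fin p → (Fin p)ᵒᵈ) :=
      fun i j h => hMt i j (by exact_mod_cast h)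
    have hLblock : L.BlockTriangular (OrderDual.toDual : Fin p → (Fin p)ᵒᵈ) :=
      fun i j h => hLt i j (by exact_mod_cast h)
    have hLdetpos : 0 < L.det := by
      rw [Matrix.det_of_lowerTriangular L hLblock]
      exact Finset.prod_pos fun i _ => hLd i
    have hlogM : Real.log M.det = ∑ i, Real.log (M i i) := by
      rw [Matrix.det_of_lowerTriangular M hMblock]
      exact Real.log_prod fun i _ => (hMd i).ne'
    have hlogL : Real.log L.det = (∑ i, Real.log (M i i)) - (1 / 2) * Real.log A.det := by
      have h1 : M.det = K.det * L.det := by rw [hMdef, Matrix.det_mul]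
      have h3 : Real.log M.det = Real.log K.det + Real.log L.det := by
        rw [h1, Real.log_mul hKdetpos.ne' hLdetpos.ne']
      rw [hlogM] at h3
      linarith [hlogA]
    have htr : (A * L * Lᵀ).trace = ∑ i, ∑ j, M i j * M i j := by
      have h1 : A * L * Lᵀ = Kᵀ * (M * Lᵀ) := by
        rw [← hKA, Matrix.mul_assoc Kᵀ K L, Matrix.mul_assoc Kᵀ (K * L) Lᵀ, hMdef]
      rw [h1, Matrix.trace_mul_comm, Matrix.mul_assoc, ← Matrix.transpose_mul, ← hMdef]
      simp [Matrix.trace, Matrix.diag, Matrix.mul_apply]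
    have hineq1 : ∑ i, M i i * M i i ≤ ∑ i, ∑ j, M i j * M i j :=
      Finset.sum_le_sum fun i _ =>
        Finset.single_le_sum (fun j _ => mul_self_nonneg (M i j)) (Finset.mem_univ i)
    have hineq2 : ∑ _i : Fin p, (1 / 2 : ℝ)
        ≤ ∑ i, ((1 / 2) * (M i i * M i i) - Real.log (M i i)) := by
      refine Finset.sum_le_sum fun i _ => ?_
      have hlog := Real.log_le_sub_one_of_pos (hMd i)
      nlinarith [sq_nonneg (M i i - 1), hMd i]
    rw [Finset.sum_const, Finset.card_univ, Fintype.card_fin, nsmul_eq_mul,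
      Finset.sum_sub_distrib, ← Finset.mul_sum] at hineq2
    rw [htr, hlogL]
    linarith
end
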